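/- Let α ∈ (0,1) and λ ≥ 0, and let the temporal mesh satisfy λ τ_j^α < 1/Γ(2−α) for all j = 1,…,M. If two real sequences (V^j)_{j=0}^M and (B^j)_{j=0}^M satisfy V⁰ ≤ B⁰ and (δ_t^α V^m) − λ V^m ≤ (δ_t^α B^m) − λ B^m for all m = 1,…,M, then V^m ≤ B^m for all m = 0,…,M. -/

import Mathlib

open Real MeasureTheory

/-- The L1 discrete Caputo operator of order `α` on the temporal mesh `t`. -/
noncomputable def deltaL1 (α : ℝ) (t : ℕ → ℝ) (V : ℕ → ℝ) (m : ℕ) : ℝ :=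
  (1 / Real.Gamma (1 - α)) *
    ∑ j ∈ Finset.Icc 1 m,
      ((V j - V (j - 1)) / (t j - t (j - 1))) *
        ∫ s in (t (j - 1))..(t j), (t m - s) ^ (-α)

/-- Closed form for the kernel integral. -/
lemma caputo_integral (α : ℝ) (hα1 : α < 1) (a b c : ℝ) :
    (∫ s in a..b, (c - s) ^ (-α)) =
      ((c - a) ^ (1 - α) - (c - b) ^ (1 - α)) / (1 - α) := by
  have h1 : (∫ s in a..b, (c - s) ^ (-α)) = ∫ u in (c - b)..(c - a), u ^ (-α) :=
    intervalIntegral.integral_comp_sub_left (fun u : ℝ => u ^ (-α)) c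
  rw [h1, integral_rpow (Or.inl (by linarith))]
  norm_num
  ring_nf

/-- Abel-type summation inequality. -/
lemma abel_ineq (d W : ℕ → ℝ) :
    ∀ m, 1 ≤ m → 0 ≤ d 1 → (∀ j, 1 ≤ j → j < m → d j ≤ d (j + 1)) →
      (∀ j, j < m → 0 ≤ W j) →
      ∑ j ∈ Finset.Icc 1 m, (W j - W (j - 1)) * d j ≤ d m * W m := by
  intro m
  induction m with
  | zero => omega
  | succ n ih =>
    intro _ hd1 hmono hW
    rcases Nat.eq_zero_or_pos n with rfl | hn
    · simp only [Finset.Icc_self, Finset.sum_singleton]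
      have := hW 0 (by omega)
      nlinarith
    · have hsum : ∑ j ∈ Finset.Icc 1 (n + 1), (W j - W (j - 1)) * d j
          = (∑ j ∈ Finset.Icc 1 n, (W j - W (j - 1)) * d j)
            + (W (n + 1) - W (n + 1 - 1)) * d (n + 1) := by
        rw [← Finset.sum_Icc_succ_top (by omega : 1 ≤ n + 1)]
      rw [hsum]
      have h1 : ∑ j ∈ Finset.Icc 1 n, (W j - W (j - 1)) * d j ≤ d n * W n :=
        ih hn hd1 (fun j h1 h2 => hmono j h1 (by omega)) (fun j hj => hW j (by omega))
      have h2 : d n ≤ d (n + 1) := hmono n hn (by omega)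
      have h3 : 0 ≤ W n := hW n (by omega)
      simp only [Nat.add_sub_cancel]
      nlinarith
      
theorem stmt1
    (α T lam : ℝ) (hα : α ∈ Set.Ioo (0 : ℝ) 1) (hT : 0 < T) (hlam : 0 ≤ lam)
    (M : ℕ) (hM : 1 ≤ M) (t : ℕ → ℝ)
    (ht0 : t 0 = 0) (htM : t M = T)
    (hmono : ∀ j, j < M → t j < t (j + 1))
    (hmesh : ∀ j, 1 ≤ j → j ≤ M →
      lam * (t j - t (j - 1)) ^ α < 1 / Real.Gamma (2 - α))
    (V B : ℕ → ℝ)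
    (h0 : V 0 ≤ B 0)
    (hcomp : ∀ m, 1 ≤ m → m ≤ M →
      deltaL1 α t V m - lam * V m ≤ deltaL1 α t B m - lam * B m) :
    ∀ m, m ≤ M → V m ≤ B m := by
  obtain ⟨hα0, hα1⟩ := hα
  have hp0 : (0:ℝ) < 1 - α := by linarith
  have hG : 0 < Real.Gamma (1 - α) := Real.Gamma_pos_of_pos hp0
  -- strict monotonicity of the mesh
  have htlt : ∀ i j : ℕ, i < j → j ≤ M → t i < t j := by
    intro i j hij hjM
    induction j with
    | zero => omega
    | succ n ihn =>
      rcases Nat.lt_or_ge i n with h | h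
      · exact lt_trans (ihn h (by omega)) (hmono n (by omega))
      · have : i = n := by omega
        subst this
        exact hmono i (by omega)
  have htle : ∀ i j : ℕ, i ≤ j → j ≤ M → t i ≤ t j := by
    intro i j hij hjM
    rcases Nat.lt_or_ge i j with h | h
    · exact (htlt i j h hjM).le
    · have : i = j := by omega
      subst this; exact le_refl _
  set W : ℕ → ℝ := fun j => B j - V j with hW
  suffices hkey : ∀ m, m ≤ M → 0 ≤ W m by
    intro m hm
    have := hkey m hm
    simp only [hW] at this
    linarith
  intro m
  induction m using Nat.strong_induction_on with
  | _ m ih =>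
    intro hmM
    rcases Nat.eq_zero_or_pos m with rfl | hm1
    · simp only [hW]; linarith
    -- the coefficients
    set d : ℕ → ℝ := fun j =>
      (((t m - t (j - 1)) ^ (1 - α) - (t m - t j) ^ (1 - α)) / (1 - α)) / (t j - t (j - 1))
      with hd
    -- τ_j > 0
    have htau : ∀ j, 1 ≤ j → j ≤ M → 0 < t j - t (j - 1) := by
      intro j h1 h2
      have := htlt (j - 1) j (by omega) h2
      linarith
    -- step 1 : lam * W m ≤ deltaL1 W
    have hstep1 : lam * W m ≤ deltaL1 α t B m - deltaL1 α t V m := by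
      have := hcomp m hm1 hmM
      simp only [hW]; linarith
    -- step 2 : difference of deltaL1 as a single sum
    have hstep2 : deltaL1 α t B m - deltaL1 α t V m
        = (1 / Real.Gamma (1 - α)) *
          ∑ j ∈ Finset.Icc 1 m, (W j - W (j - 1)) * d j := by
      unfold deltaL1
      rw [← mul_sub, ← Finset.sum_sub_distrib]
      congr 1
      apply Finset.sum_congr rfl
      intro j hj
      simp only [Finset.mem_Icc] at hj
      have hjm : j ≤ M := le_trans hj.2 hmM
      have hab : t (j - 1) ≤ t j := htle (j - 1) j (by omega) hjm
      have hbc : t j ≤ t m := htle j m hj.2 hmM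
      rw [caputo_integral α hα1 (t (j - 1)) (t j) (t m)]
      simp only [hd, hW]
      field_simp
      ring
    -- the integral-average form of d at j = m
    have hdm : d m = (t m - t (m - 1)) ^ (-α) / (1 - α) := by
      have htm : 0 < t m - t (m - 1) := htau m hm1 hmM
      simp only [hd, sub_self, Real.zero_rpow (by linarith : (1:ℝ) - α ≠ 0), sub_zero]
      have hexp : (t m - t (m - 1)) ^ (1 - α)
          = (t m - t (m - 1)) ^ (-α) * (t m - t (m - 1)) := by
        rw [← Real.rpow_add_one (ne_of_gt htm)]
        congr 1
        ring
      rw [hexp]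
      field_simp
    -- positivity of d 1
    have hd1 : 0 ≤ d 1 := by
      simp only [hd]
      have h1M : 1 ≤ M := hM
      have hab : t 0 ≤ t 1 := htle 0 1 (by omega) h1M
      have hbc : t 1 ≤ t m := htle 1 m hm1 hmM
      have h1 : (0:ℝ) ≤ t m - t 1 := by linarith
      have h2 : t m - t 1 ≤ t m - t 0 := by linarith
      have hnum : (t m - t 1) ^ (1 - α) ≤ (t m - t 0) ^ (1 - α) :=
        Real.rpow_le_rpow h1 h2 (le_of_lt hp0)
      rcases eq_or_lt_of_le hab with h | h
      · rw [h]; simp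
      · apply div_nonneg (div_nonneg (by linarith) (le_of_lt hp0)) (by norm_num; linarith)
    -- monotonicity of d
    have hdmono : ∀ j, 1 ≤ j → j < m → d j ≤ d (j + 1) := by
      intro j h1 h2
      have hjm : j + 1 ≤ m := by omega
      have hjM : j + 1 ≤ M := le_trans hjm hmM
      have hx2 : t (j - 1) < t j := htlt (j - 1) j (by omega) (by omega)
      have hx1 : t j < t (j + 1) := htlt j (j + 1) (by omega) hjM
      have hx0 : t (j + 1) ≤ t m := htle (j + 1) m hjm hmM
      -- slopes of concave x ^ (1-α)
      have hconc := Real.concaveOn_rpow (le_of_lt hp0) (by linarith : (1:ℝ) - α ≤ 1)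
      have hs := hconc.slope_anti_adjacent
        (x := t m - t (j + 1)) (y := t m - t j) (z := t m - t (j - 1))
        (by simp; linarith) (by simp; linarith [htle (j-1) m (by omega) hmM])
        (by linarith) (by linarith)
      simp only [hd, Nat.add_sub_cancel]
      have h3 : t m - t (j - 1) - (t m - t j) = t j - t (j - 1) := by ring
      have h4 : t m - t j - (t m - t (j + 1)) = t (j + 1) - t j := by ring
      rw [h3, h4] at hs
      have hτj : 0 < t j - t (j - 1) := by linarith
      have hτj1 : 0 < t (j + 1) - t j := by linarith
      rw [div_le_div_iff₀ hτj hτj1] at hs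
      rw [div_div, div_div,
        div_le_div_iff₀ (mul_pos hp0 hτj) (mul_pos hp0 hτj1)]
      nlinarith [hs, hp0]
    -- apply Abel inequality
    have habel : ∑ j ∈ Finset.Icc 1 m, (W j - W (j - 1)) * d j ≤ d m * W m :=
      abel_ineq d W m hm1 hd1 hdmono (fun j hj => ih j hj (by omega))
    -- from step1 and step2: Γ(1-α) * lam * W m ≤ sum
    have hstep4 : Real.Gamma (1 - α) * lam * W m
        ≤ ∑ j ∈ Finset.Icc 1 m, (W j - W (j - 1)) * d j := by
      rw [hstep2] at hstep1
      calc Real.Gamma (1 - α) * lam * W m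
          = Real.Gamma (1 - α) * (lam * W m) := by ring
        _ ≤ Real.Gamma (1 - α) *
            ((1 / Real.Gamma (1 - α)) * ∑ j ∈ Finset.Icc 1 m, (W j - W (j - 1)) * d j) :=
            mul_le_mul_of_nonneg_left hstep1 (le_of_lt hG)
        _ = ∑ j ∈ Finset.Icc 1 m, (W j - W (j - 1)) * d j := by
            field_simp
    -- the mesh condition gives Γ(1-α) * lam < d m
    have hcond : Real.Gamma (1 - α) * lam < d m := by
      have htm : 0 < t m - t (m - 1) := htau m hm1 hmM
      have hG2 : Real.Gamma (2 - α) = (1 - α) * Real.Gamma (1 - α) := by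
        have : (2:ℝ) - α = (1 - α) + 1 := by ring
        rw [this, Real.Gamma_add_one (by linarith)]
      have hmesh' := hmesh m hm1 hmM
      rw [hG2] at hmesh'
      have hτα : 0 < (t m - t (m - 1)) ^ α := Real.rpow_pos_of_pos htm α
      have hGp : 0 < (1 - α) * Real.Gamma (1 - α) := by positivity
      have key : lam * (t m - t (m - 1)) ^ α * ((1 - α) * Real.Gamma (1 - α)) < 1 := by
        have h := mul_lt_mul_of_pos_right hmesh' hGp
        rwa [one_div, inv_mul_cancel₀ (ne_of_gt hGp)] at h
      rw [hdm, Real.rpow_neg (le_of_lt htm), lt_div_iff₀ hp0, inv_eq_one_div,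
        lt_div_iff₀ hτα]
      calc Real.Gamma (1 - α) * lam * (1 - α) * (t m - t (m - 1)) ^ α
          = lam * (t m - t (m - 1)) ^ α * ((1 - α) * Real.Gamma (1 - α)) := by ring
        _ < 1 := key
    -- conclude
    by_contra hneg
    push_neg at hneg
    have h5 : Real.Gamma (1 - α) * lam * W m ≤ d m * W m := le_trans hstep4 habel
    nlinarith [h5, hcond, hneg]
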